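/- Let N be a norm on ℝ², let P : [0, L] → ℝ² and Q : [0, M] → ℝ² be the unit-speed parametrizations under N of two polygonal curves, and define h(z) := N(P(z₁) − Q(z₂)) for z ∈ [0,L] × [0,M]. Let x_r, y_r, x, y ∈ [0,L] × [0,M] with x_r ≤ y_r and x ≤ y componentwise, x_r → x and y_r → y. Let f_r be an (x_r, y_r)-path for each r ∈ ℕ and let f be an (x,y)-path such that for every s ∈ (x₁+x₂, y₁+y₂), s eventually lies in the domain of f_r and f_r(s) → f(s) as r → ∞. Then the costs converge: cost(f_r) → cost(f), where costs are taken with respect to h. -/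

import Mathlib

/-- `N : ℝ × ℝ → ℝ` is a norm on `ℝ²`. -/
def IsNorm (N : ℝ × ℝ → ℝ) : Prop :=
  (∀ z : ℝ × ℝ, 0 ≤ N z) ∧
  (∀ z : ℝ × ℝ, N z = 0 ↔ z = 0) ∧
  (∀ (c : ℝ) (z : ℝ × ℝ), N (c • z) = |c| * N z) ∧
  (∀ z w : ℝ × ℝ, N (z + w) ≤ N z + N w)

/-- `P` is the unit-speed parametrization under the norm `N` of the polygonal curve
with vertices `p 0, …, p n` (consecutive vertices distinct) and arc lengths `L`. -/
def IsUnitSpeedParam (N : ℝ × ℝ → ℝ) (n : ℕ) (p : ℕ → ℝ × ℝ) (L : ℕ → ℝ)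
    (P : ℝ → ℝ × ℝ) : Prop :=
  (∀ i : ℕ, 1 ≤ i → i ≤ n → p i ≠ p (i - 1)) ∧
  (∀ i : ℕ, L i = ∑ i' ∈ Finset.Icc 1 i, N (p i' - p (i' - 1))) ∧
  (∀ i : ℕ, 1 ≤ i → i ≤ n → ∀ s ∈ Set.Icc (L (i - 1)) (L i),
    P s = p (i - 1) + ((s - L (i - 1)) / N (p i - p (i - 1))) • (p i - p (i - 1)))

/-- An `(x,y)`-path: a function `f : [x₁+x₂, y₁+y₂] → ℝ` with `f(x₁+x₂) = x₁`,
`f(y₁+y₂) = y₁` such that both `f` and `s ↦ s − f s` are monotone non-decreasing. -/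
def IsPath (x y : ℝ × ℝ) (f : ℝ → ℝ) : Prop :=
  x.1 ≤ y.1 ∧ x.2 ≤ y.2 ∧
  f (x.1 + x.2) = x.1 ∧ f (y.1 + y.2) = y.1 ∧
  MonotoneOn f (Set.Icc (x.1 + x.2) (y.1 + y.2)) ∧
  MonotoneOn (fun s => s - f s) (Set.Icc (x.1 + x.2) (y.1 + y.2))

/-- The cost of an `(x,y)`-path `f` with respect to `h`. -/
noncomputable def pathCost (h : ℝ × ℝ → ℝ) (x y : ℝ × ℝ) (f : ℝ → ℝ) : ℝ :=
  ∫ s in (x.1 + x.2)..(y.1 + y.2), h (f s, s - f s)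

open Filter Topology MeasureTheory

lemma continuousOn_union_closed {Y : Type*} [TopologicalSpace Y] {f : ℝ → Y} {s t : Set ℝ}
    (hsc : IsClosed s) (htc : IsClosed t)
    (hs : ContinuousOn f s) (ht : ContinuousOn f t) : ContinuousOn f (s ∪ t) := by
  intro z hz
  unfold ContinuousWithinAt
  rw [nhdsWithin_union, tendsto_sup]
  constructor
  · by_cases hzs : z ∈ s
    · exact hs z hzs
    · have : 𝓝[s] z = ⊥ := by
        rw [← not_neBot]
        intro hnb
        exact hzs (hsc.closure_eq ▸ mem_closure_iff_nhdsWithin_neBot.mpr hnb)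
      rw [this]; exact tendsto_bot
  · by_cases hzt : z ∈ t
    · exact ht z hzt
    · have : 𝓝[t] z = ⊥ := by
        rw [← not_neBot]
        intro hnb
        exact hzt (htc.closure_eq ▸ mem_closure_iff_nhdsWithin_neBot.mpr hnb)
      rw [this]; exact tendsto_bot

lemma IsNorm.continuous {N : ℝ × ℝ → ℝ} (hN : IsNorm N) : Continuous N := by
  obtain ⟨h0, heq, hsmul, hadd⟩ := hN
  set C : ℝ := N (1, 0) + N (0, 1) with hC
  have hbound : ∀ z : ℝ × ℝ, N z ≤ C * ‖z‖ := by
    intro z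
    have hz : z = z.1 • ((1:ℝ), (0:ℝ)) + z.2 • ((0:ℝ), (1:ℝ)) := by
      simp [Prod.ext_iff]
    have h1 : N z ≤ |z.1| * N (1,0) + |z.2| * N (0,1) := by
      calc N z = N (z.1 • ((1:ℝ), (0:ℝ)) + z.2 • ((0:ℝ), (1:ℝ))) := by rw [← hz]
        _ ≤ N (z.1 • ((1:ℝ), (0:ℝ))) + N (z.2 • ((0:ℝ), (1:ℝ))) := hadd _ _
        _ = |z.1| * N (1,0) + |z.2| * N (0,1) := by rw [hsmul, hsmul]
    have h2 : |z.1| ≤ ‖z‖ := by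
      have := norm_fst_le z; simpa using this
    have h3 : |z.2| ≤ ‖z‖ := by
      have := norm_snd_le z; simpa using this
    nlinarith [h0 ((1:ℝ),(0:ℝ)), h0 ((0:ℝ),(1:ℝ)), abs_nonneg z.1, abs_nonneg z.2]
  have hC0 : 0 ≤ C := by
    have := h0 ((1:ℝ),(0:ℝ)); have := h0 ((0:ℝ),(1:ℝ)); linarith
  have hneg : ∀ z : ℝ × ℝ, N (-z) = N z := by
    intro z
    have := hsmul (-1) z
    simpa using this
  have hlip : ∀ z w : ℝ × ℝ, |N z - N w| ≤ C * ‖z - w‖ := by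
    intro z w
    have h1 : N z ≤ N (z - w) + N w := by
      have := hadd (z - w) w; simpa using this
    have h2 : N w ≤ N (z - w) + N z := by
      have h3 := hadd (w - z) z
      have h4 : N (w - z) = N (z - w) := by rw [← neg_sub z w, hneg]
      rw [h4] at h3; simpa using h3
    have h5 := hbound (z - w)
    rw [abs_sub_le_iff]
    constructor <;> linarith
  apply LipschitzWith.continuous (K := C.toNNReal)
  apply LipschitzWith.of_dist_le_mul
  intro z w
  rw [Real.dist_eq, dist_eq_norm, Real.coe_toNNReal C hC0]
  exact hlip z w

lemma IsUnitSpeedParam.continuousOn {N : ℝ × ℝ → ℝ} {n : ℕ} {p : ℕ → ℝ × ℝ} {L : ℕ → ℝ}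
    {P : ℝ → ℝ × ℝ} (hN : IsNorm N) (hP : IsUnitSpeedParam N n p L P) :
    ContinuousOn P (Set.Icc 0 (L n)) := by
  obtain ⟨hne, hL, hform⟩ := hP
  have hLsucc : ∀ i : ℕ, L (i + 1) = L i + N (p (i + 1) - p i) := by
    intro i
    rw [hL (i + 1), hL i, ← Finset.insert_Icc_right_eq_Icc_add_one (by omega : 1 ≤ i + 1),
      Finset.sum_insert (by simp)]
    simp [add_comm]
  have hL0 : L 0 = 0 := by simp [hL 0]
  have hmono : Monotone L := monotone_nat_of_le_succ fun i => by
    rw [hLsucc i]; linarith [hN.1 (p (i + 1) - p i)]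
  have key : ∀ k : ℕ, k ≤ n → ContinuousOn P (Set.Icc 0 (L k)) := by
    intro k
    induction k with
    | zero =>
      intro _
      rw [hL0, Set.Icc_self]
      exact continuousOn_singleton _ _
    | succ k ih =>
      intro hkn
      have h1 : ContinuousOn P (Set.Icc (L k) (L (k + 1))) := by
        have hform' := hform (k + 1) (by omega) hkn
        simp only [Nat.add_sub_cancel] at hform'
        have hc : ContinuousOn
            (fun s : ℝ => p k + ((s - L k) / N (p (k + 1) - p k)) • (p (k + 1) - p k))
            (Set.Icc (L k) (L (k + 1))) := by fun_prop
        exact hc.congr fun s hs => hform' s hs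
      have h2 := continuousOn_union_closed isClosed_Icc isClosed_Icc (ih (by omega)) h1
      rwa [Set.Icc_union_Icc_eq_Icc (hL0 ▸ hmono (Nat.zero_le k)) (hmono (Nat.le_succ k))] at h2
  exact key n le_rfl

lemma IsPath.mem_box {x y : ℝ × ℝ} {f : ℝ → ℝ} (hf : IsPath x y f) {s : ℝ}
    (hs : s ∈ Set.Icc (x.1 + x.2) (y.1 + y.2)) :
    f s ∈ Set.Icc x.1 y.1 ∧ s - f s ∈ Set.Icc x.2 y.2 := by
  obtain ⟨h1, h2, ha, hb, hm, hm2⟩ := hf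
  have hab : x.1 + x.2 ≤ y.1 + y.2 := by linarith
  have haI : x.1 + x.2 ∈ Set.Icc (x.1 + x.2) (y.1 + y.2) := ⟨le_refl _, hab⟩
  have hbI : y.1 + y.2 ∈ Set.Icc (x.1 + x.2) (y.1 + y.2) := ⟨hab, le_refl _⟩
  have e1 := hm haI hs hs.1
  have e2 := hm hs hbI hs.2
  have e3 := hm2 haI hs hs.1
  have e4 := hm2 hs hbI hs.2
  simp only at e3 e4
  rw [ha] at e1 e3
  rw [hb] at e2 e4
  exact ⟨⟨e1, e2⟩, ⟨by linarith, by linarith⟩⟩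

lemma IsPath.continuousOn {x y : ℝ × ℝ} {f : ℝ → ℝ} (hf : IsPath x y f) :
    ContinuousOn f (Set.Icc (x.1 + x.2) (y.1 + y.2)) := by
  obtain ⟨-, -, -, -, hm, hm2⟩ := hf
  apply LipschitzOnWith.continuousOn (K := 1)
  apply LipschitzOnWith.of_dist_le_mul
  intro s hs t ht
  rw [Real.dist_eq, Real.dist_eq, NNReal.coe_one, one_mul]
  rcases le_total s t with hst | hst
  · have e1 := hm hs ht hst
    have e2 := hm2 hs ht hst
    simp only at e2
    rw [abs_of_nonpos (by linarith : s - t ≤ 0)]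
    rw [abs_sub_le_iff]
    constructor <;> linarith
  · have e1 := hm ht hs hst
    have e2 := hm2 ht hs hst
    simp only at e2
    rw [abs_of_nonneg (by linarith : 0 ≤ s - t)]
    rw [abs_sub_le_iff]
    constructor <;> linarith


/-- If `(x_r, y_r)`-paths `f_r` converge pointwise (on the open
parameter interval, eventually lying in the domains) to an `(x,y)`-path `f`, with
`x_r → x` and `y_r → y`, then the costs converge: `cost(f_r) → cost(f)`, where
`h(z) = N(P(z₁) − Q(z₂))` for unit-speed parametrizations `P, Q` of two polygonal
curves under a norm `N`. -/
theorem path_costs_converge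
    (N : ℝ × ℝ → ℝ) (hN : IsNorm N)
    (n m : ℕ) (p q : ℕ → ℝ × ℝ) (L M : ℕ → ℝ) (P Q : ℝ → ℝ × ℝ)
    (hP : IsUnitSpeedParam N n p L P) (hQ : IsUnitSpeedParam N m q M Q)
    (h : ℝ × ℝ → ℝ) (hh : ∀ z : ℝ × ℝ, h z = N (P z.1 - Q z.2))
    (xr yr : ℕ → ℝ × ℝ) (x y : ℝ × ℝ)
    (hxrbox : ∀ r : ℕ, xr r ∈ Set.Icc ((0 : ℝ), (0 : ℝ)) (L n, M m))
    (hyrbox : ∀ r : ℕ, yr r ∈ Set.Icc ((0 : ℝ), (0 : ℝ)) (L n, M m))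
    (hxbox : x ∈ Set.Icc ((0 : ℝ), (0 : ℝ)) (L n, M m))
    (hybox : y ∈ Set.Icc ((0 : ℝ), (0 : ℝ)) (L n, M m))
    (hxryr : ∀ r : ℕ, (xr r).1 ≤ (yr r).1 ∧ (xr r).2 ≤ (yr r).2)
    (hxy : x.1 ≤ y.1 ∧ x.2 ≤ y.2)
    (hxconv : Tendsto xr atTop (𝓝 x))
    (hyconv : Tendsto yr atTop (𝓝 y))
    (fr : ℕ → ℝ → ℝ) (hfr : ∀ r : ℕ, IsPath (xr r) (yr r) (fr r))
    (f : ℝ → ℝ) (hf : IsPath x y f)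
    (hdom : ∀ s ∈ Set.Ioo (x.1 + x.2) (y.1 + y.2),
      ∀ᶠ r in atTop, s ∈ Set.Icc ((xr r).1 + (xr r).2) ((yr r).1 + (yr r).2))
    (hptwise : ∀ s ∈ Set.Ioo (x.1 + x.2) (y.1 + y.2),
      Tendsto (fun r => fr r s) atTop (𝓝 (f s))) :
    Tendsto (fun r => pathCost h (xr r) (yr r) (fr r)) atTop
      (𝓝 (pathCost h x y f)) := by
  -- abbreviations
  set a : ℝ := x.1 + x.2 with ha_def
  set b : ℝ := y.1 + y.2 with hb_def
  set ar : ℕ → ℝ := fun r => (xr r).1 + (xr r).2 with har_def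
  set br : ℕ → ℝ := fun r => (yr r).1 + (yr r).2 with hbr_def
  have hab : a ≤ b := by rw [ha_def, hb_def]; linarith [hxy.1, hxy.2]
  have habr : ∀ r, ar r ≤ br r := fun r => by
    simp only [har_def, hbr_def]; linarith [(hxryr r).1, (hxryr r).2]
  have har : Tendsto ar atTop (𝓝 a) :=
    ((continuous_fst.add continuous_snd).tendsto x).comp hxconv
  have hbr : Tendsto br atTop (𝓝 b) :=
    ((continuous_fst.add continuous_snd).tendsto y).comp hyconv
  -- the compact box and continuity of h on it
  set K : Set (ℝ × ℝ) := Set.Icc ((0 : ℝ), (0 : ℝ)) (L n, M m) with hK_def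
  have hPc : ContinuousOn P (Set.Icc 0 (L n)) := IsUnitSpeedParam.continuousOn hN hP
  have hQc : ContinuousOn Q (Set.Icc 0 (M m)) := IsUnitSpeedParam.continuousOn hN hQ
  have hhc : ContinuousOn h K := by
    have hc : ContinuousOn (fun z : ℝ × ℝ => N (P z.1 - Q z.2)) K := by
      apply hN.continuous.comp_continuousOn
      apply ContinuousOn.sub
      · exact hPc.comp continuous_fst.continuousOn fun z hz => ⟨hz.1.1, hz.2.1⟩
      · exact hQc.comp continuous_snd.continuousOn fun z hz => ⟨hz.1.2, hz.2.2⟩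
    exact hc.congr fun z _ => hh z
  obtain ⟨C, hC⟩ := isCompact_Icc.exists_bound_of_continuousOn hhc
  have h00K : ((0 : ℝ), (0 : ℝ)) ∈ K := ⟨le_refl _, le_trans hxbox.1 hxbox.2⟩
  have hC0 : 0 ≤ C := le_trans (norm_nonneg _) (hC _ h00K)
  -- memberships
  have hmemK : ∀ r : ℕ, ∀ s ∈ Set.Icc (ar r) (br r), (fr r s, s - fr r s) ∈ K := by
    intro r s hs
    obtain ⟨h1, h2⟩ := (hfr r).mem_box hs
    exact ⟨⟨le_trans (hxrbox r).1.1 h1.1, le_trans (hxrbox r).1.2 h2.1⟩,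
      ⟨le_trans h1.2 (hyrbox r).2.1, le_trans h2.2 (hyrbox r).2.2⟩⟩
  have hmemK0 : ∀ s ∈ Set.Icc a b, (f s, s - f s) ∈ K := by
    intro s hs
    obtain ⟨h1, h2⟩ := hf.mem_box hs
    exact ⟨⟨le_trans hxbox.1.1 h1.1, le_trans hxbox.1.2 h2.1⟩,
      ⟨le_trans h1.2 hybox.2.1, le_trans h2.2 hybox.2.2⟩⟩
  -- continuity of the integrands
  have hgrc : ∀ r : ℕ, ContinuousOn (fun s => h (fr r s, s - fr r s)) (Set.Icc (ar r) (br r)) := by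
    intro r
    have hmap : ContinuousOn (fun s => (fr r s, s - fr r s)) (Set.Icc (ar r) (br r)) :=
      (hfr r).continuousOn.prodMk (continuousOn_id.sub (hfr r).continuousOn)
    exact hhc.comp hmap (hmemK r)
  -- rewrite costs as indicator integrals
  have heq1 : ∀ r, pathCost h (xr r) (yr r) (fr r) =
      ∫ s, (Set.Ioc (ar r) (br r)).indicator (fun s => h (fr r s, s - fr r s)) s := by
    intro r
    rw [integral_indicator measurableSet_Ioc]
    simp only [pathCost]
    rw [intervalIntegral.integral_of_le (habr r)]
  have heq2 : pathCost h x y f =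
      ∫ s, (Set.Ioc a b).indicator (fun s => h (f s, s - f s)) s := by
    rw [integral_indicator measurableSet_Ioc]
    simp only [pathCost]
    rw [intervalIntegral.integral_of_le hab]
  rw [heq2]
  refine Tendsto.congr (fun r => (heq1 r).symm) ?_
  -- dominated convergence
  apply tendsto_integral_filter_of_dominated_convergence
    ((Set.Icc (a - 1) (b + 1)).indicator fun _ => C)
  · -- measurability
    filter_upwards with r
    rw [aestronglyMeasurable_indicator_iff measurableSet_Ioc]
    exact ((hgrc r).mono Set.Ioc_subset_Icc_self).aestronglyMeasurable measurableSet_Ioc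
  · -- bound
    have e1 : ∀ᶠ r in atTop, a - 1 < ar r := har.eventually (eventually_gt_nhds (by linarith))
    have e2 : ∀ᶠ r in atTop, br r < b + 1 := hbr.eventually (eventually_lt_nhds (by linarith))
    filter_upwards [e1, e2] with r hr1 hr2
    filter_upwards with s
    by_cases hs : s ∈ Set.Ioc (ar r) (br r)
    · have hmem : s ∈ Set.Icc (a - 1) (b + 1) :=
        Set.mem_Icc.mpr ⟨by linarith [hs.1], by linarith [hs.2]⟩
      rw [Set.indicator_of_mem hs, Set.indicator_of_mem hmem]
      exact hC _ (hmemK r s (Set.Ioc_subset_Icc_self hs))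
    · rw [Set.indicator_of_notMem hs]
      simpa using Set.indicator_nonneg (fun _ _ => hC0) s
  · -- bound integrable
    rw [integrable_indicator_iff measurableSet_Icc]
    apply (integrableOn_const_iff (C := C)).mpr
    exact Or.inr measure_Icc_lt_top
  · -- a.e. pointwise convergence
    have hane : ∀ᵐ s : ℝ, s ≠ a := by
      rw [ae_iff]; simp
    have hbne : ∀ᵐ s : ℝ, s ≠ b := by
      rw [ae_iff]; simp
    filter_upwards [hane, hbne] with s hsa hsb
    rcases lt_or_gt_of_ne hsa with hlt | hgt
    · -- s < a : eventually outside
      have e1 : ∀ᶠ r in atTop, s < ar r := har.eventually (eventually_gt_nhds hlt)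
      have e0 : s ∉ Set.Ioc a b := fun hs => absurd hs.1 (not_lt.mpr hlt.le)
      rw [Set.indicator_of_notMem e0]
      apply Tendsto.congr' ?_ tendsto_const_nhds
      filter_upwards [e1] with r hr
      exact (Set.indicator_of_notMem (fun hs => absurd hs.1 (not_lt.mpr hr.le)) _).symm
    rcases lt_or_gt_of_ne hsb with hltb | hgtb
    · -- a < s < b : convergence
      have hsIoo : s ∈ Set.Ioo a b := ⟨hgt, hltb⟩
      have e1 : ∀ᶠ r in atTop, ar r < s := har.eventually (eventually_lt_nhds hgt)
      have e2 := hdom s hsIoo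
      have e3 : ∀ᶠ r in atTop, s ∈ Set.Ioc (ar r) (br r) := by
        filter_upwards [e1, e2] with r hr1 hr2
        exact ⟨hr1, hr2.2⟩
      have hmem : s ∈ Set.Ioc a b := Set.mem_Ioc.mpr ⟨hgt, hltb.le⟩
      rw [Set.indicator_of_mem hmem]
      apply Tendsto.congr' (f₁ := fun r => h (fr r s, s - fr r s))
      · filter_upwards [e3] with r hr
        exact (Set.indicator_of_mem hr (fun u => h (fr r u, u - fr r u))).symm
      · have hz0 : (f s, s - f s) ∈ K := hmemK0 s ⟨hgt.le, hltb.le⟩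
        have hzconv : Tendsto (fun r => (fr r s, s - fr r s)) atTop (𝓝 (f s, s - f s)) :=
          (hptwise s hsIoo).prodMk_nhds (tendsto_const_nhds.sub (hptwise s hsIoo))
        have hzK : ∀ᶠ r in atTop, (fr r s, s - fr r s) ∈ K := by
          filter_upwards [e2] with r hr
          exact hmemK r s hr
        exact (hhc _ hz0).tendsto.comp (tendsto_nhdsWithin_iff.mpr ⟨hzconv, hzK⟩)
    · -- b < s : eventually outside
      have e1 : ∀ᶠ r in atTop, br r < s := hbr.eventually (eventually_lt_nhds hgtb)
      have e0 : s ∉ Set.Ioc a b := fun hs => absurd hs.2 (not_le.mpr hgtb)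
      rw [Set.indicator_of_notMem e0]
      apply Tendsto.congr' ?_ tendsto_const_nhds
      filter_upwards [e1] with r hr
      exact (Set.indicator_of_notMem (fun hs => absurd hs.2 (not_le.mpr hr)) _).symm
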